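/- Let m be a positive integer and let K be a convex body in ℝ^2 whose boundary is smooth, i.e., K has a unique supporting line at each of its boundary points. Then the m-fold illumination number of K satisfies I^m(K) = 2m + 1. -/

import Mathlib

open scoped Classical RealInnerProductSpace

noncomputable section

/-- The direction `u` illuminates the boundary point `p` with respect to `K`:
there is `l > 0` with `p + l • u` in the interior of `K`. -/
def Illuminates {d : ℕ} (K : Set (EuclideanSpace ℝ (Fin d)))
    (u p : EuclideanSpace ℝ (Fin d)) : Prop :=
  ∃ l : ℝ, 0 < l ∧ p + l • u ∈ interior K

/-- A multiset `U` of unit directions `m`-fold illuminates `K`: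
each boundary point is illuminated by at least `m` elements of `U`
(counted with multiplicity). -/
def MFoldIlluminates {d : ℕ} (m : ℕ) (K : Set (EuclideanSpace ℝ (Fin d)))
    (U : Multiset (EuclideanSpace ℝ (Fin d))) : Prop :=
  (∀ u ∈ U, ‖u‖ = 1) ∧
    ∀ p ∈ frontier K, m ≤ Multiset.countP (fun u => Illuminates K u p) U

/-- The `m`-fold illumination number of `K`: the smallest total multiplicity of a
multiset of unit directions that `m`-fold illuminates `K`. -/
def illumNum {d : ℕ} (m : ℕ) (K : Set (EuclideanSpace ℝ (Fin d))) : ℕ :=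
  sInf {n | ∃ U : Multiset (EuclideanSpace ℝ (Fin d)),
    MFoldIlluminates m K U ∧ Multiset.card U = n}

/-! ### Auxiliary lemmas -/

section Aux

open Real

theorem ill_inner_neg {d : ℕ} {K : Set (EuclideanSpace ℝ (Fin d))}
    {v p u : EuclideanSpace ℝ (Fin d)} (hsup : ∀ x ∈ K, ⟪x, v⟫ ≤ ⟪p, v⟫)
    (hv : v ≠ 0) (hIll : Illuminates K u p) : ⟪u, v⟫ < 0 := by
  obtain ⟨l, hl, hmem⟩ := hIll
  obtain ⟨ε, hε, hb⟩ := Metric.mem_nhds_iff.1 (mem_interior_iff_mem_nhds.1 hmem)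
  have hvn : (0:ℝ) < ‖v‖ := norm_pos_iff.2 hv
  set c : ℝ := ε / 2 / ‖v‖ with hc
  have hcpos : 0 < c := by positivity
  have hy : p + l • u + c • v ∈ K := by
    apply hb
    simp only [Metric.mem_ball, dist_eq_norm]
    have : p + l • u + c • v - (p + l • u) = c • v := by abel
    rw [this, norm_smul, Real.norm_eq_abs, abs_of_pos hcpos]
    rw [hc]; rw [div_mul_cancel₀ _ (ne_of_gt hvn)]
    linarith
  have := hsup _ hy
  rw [inner_add_left, inner_add_left, real_inner_smul_left, real_inner_smul_left,
    real_inner_self_eq_norm_sq] at this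
  have hcv : 0 < c * ‖v‖^2 := by positivity
  nlinarith

theorem exists_support_point {d : ℕ} {K : Set (EuclideanSpace ℝ (Fin d))}
    (hKc : IsCompact K) (hne : K.Nonempty) (v : EuclideanSpace ℝ (Fin d)) (hv : v ≠ 0) :
    ∃ p ∈ frontier K, ∀ x ∈ K, ⟪x, v⟫ ≤ ⟪p, v⟫ := by
  have hcont : Continuous fun x : EuclideanSpace ℝ (Fin d) => ⟪x, v⟫ :=
    continuous_id.inner continuous_const
  obtain ⟨p, hpK, hmax⟩ := hKc.exists_isMaxOn hne hcont.continuousOn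
  have hvn : (0:ℝ) < ‖v‖ := norm_pos_iff.2 hv
  refine ⟨p, ?_, fun x hx => hmax hx⟩
  rw [hKc.isClosed.frontier_eq]
  refine ⟨hpK, fun hpint => ?_⟩
  obtain ⟨ε, hε, hb⟩ := Metric.mem_nhds_iff.1 (mem_interior_iff_mem_nhds.1 hpint)
  set c : ℝ := ε / 2 / ‖v‖ with hc
  have hcpos : 0 < c := by positivity
  have hy : p + c • v ∈ K := by
    apply hb
    simp only [Metric.mem_ball, dist_eq_norm]
    have : p + c • v - p = c • v := by abel
    rw [this, norm_smul, Real.norm_eq_abs, abs_of_pos hcpos, hc,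
      div_mul_cancel₀ _ (ne_of_gt hvn)]
    linarith
  have := hmax hy
  simp only [Set.mem_setOf_eq] at this
  rw [inner_add_left, real_inner_smul_left, real_inner_self_eq_norm_sq] at this
  have h2 : 0 < c * ‖v‖^2 := by positivity
  linarith

theorem subset_closure_interior {d : ℕ} {K : Set (EuclideanSpace ℝ (Fin d))}
    (hKconv : Convex ℝ K) (hKint : (interior K).Nonempty) :
    K ⊆ closure (interior K) := by
  obtain ⟨z, hz⟩ := hKint
  intro a ha
  have hseq : ∀ n : ℕ, a + (1/(n+1) : ℝ) • (z - a) ∈ interior K := fun n =>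
    hKconv.add_smul_sub_mem_interior ha hz ⟨by positivity, by
      rw [div_le_one (by positivity)]; linarith⟩
  have htend : Filter.Tendsto (fun n : ℕ => a + (1/(n+1) : ℝ) • (z - a)) Filter.atTop (nhds a) := by
    have h0 : Filter.Tendsto (fun n : ℕ => (1/(n+1) : ℝ)) Filter.atTop (nhds 0) :=
      tendsto_one_div_add_atTop_nhds_zero_nat
    have := (h0.smul_const (z - a)).const_add a
    simpa using this
  exact mem_closure_of_tendsto htend (Filter.Eventually.of_forall hseq)

theorem smooth_illuminates {d : ℕ} {K : Set (EuclideanSpace ℝ (Fin d))}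
    (hKc : IsCompact K) (hKconv : Convex ℝ K) (hKint : (interior K).Nonempty)
    {p : EuclideanSpace ℝ (Fin d)} (hp : p ∈ frontier K)
    {n : EuclideanSpace ℝ (Fin d)}
    (huniq : ∀ v : EuclideanSpace ℝ (Fin d),
      (‖v‖ = 1 ∧ ∀ x ∈ K, ⟪x, v⟫ ≤ ⟪p, v⟫) → v = n)
    {u : EuclideanSpace ℝ (Fin d)} (hu : ⟪u, n⟫ < 0) : Illuminates K u p := by
  by_contra hcon
  unfold Illuminates at hcon
  push_neg at hcon
  have hpK : p ∈ K := hKc.isClosed.closure_eq ▸ frontier_subset_closure hp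
  have hsep : ∀ k : ℕ, ∃ w : EuclideanSpace ℝ (Fin d), ‖w‖ = 1 ∧
      ∀ a ∈ K, ⟪w, a⟫ ≤ ⟪w, p + (1/(k+1) : ℝ) • u⟫ := by
    intro k
    have hnot : p + (1/(k+1) : ℝ) • u ∉ interior K := hcon _ (by positivity)
    obtain ⟨f, hf⟩ := geometric_hahn_banach_open_point hKconv.interior isOpen_interior hnot
    set w0 := (InnerProductSpace.toDual ℝ (EuclideanSpace ℝ (Fin d))).symm f with hw0
    have hw0app : ∀ x, ⟪w0, x⟫ = f x := fun x => InnerProductSpace.toDual_symm_apply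
    obtain ⟨z, hz⟩ := id hKint
    have hw0ne : w0 ≠ 0 := by
      intro h0
      have := hf z hz
      rw [← hw0app, ← hw0app, h0] at this
      simp at this
    have hwn : (0:ℝ) < ‖w0‖ := norm_pos_iff.2 hw0ne
    refine ⟨‖w0‖⁻¹ • w0, ?_, ?_⟩
    · rw [norm_smul, Real.norm_eq_abs, abs_of_pos (by positivity), inv_mul_cancel₀ (ne_of_gt hwn)]
    · have hint : ∀ a ∈ interior K, ⟪‖w0‖⁻¹ • w0, a⟫ ≤ ⟪‖w0‖⁻¹ • w0, p + (1/(k+1) : ℝ) • u⟫ := by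
        intro a ha
        rw [real_inner_smul_left, real_inner_smul_left]
        exact mul_le_mul_of_nonneg_left (by rw [hw0app, hw0app]; exact (hf a ha).le)
          (by positivity)
      intro a ha
      have hcl : a ∈ closure (interior K) := subset_closure_interior hKconv hKint ha
      have hclosed : IsClosed {x : EuclideanSpace ℝ (Fin d) |
          ⟪‖w0‖⁻¹ • w0, x⟫ ≤ ⟪‖w0‖⁻¹ • w0, p + (1/(k+1) : ℝ) • u⟫} :=
        isClosed_le (continuous_const.inner continuous_id) continuous_const
      exact closure_minimal hint hclosed hcl
  choose w hwnorm hwsup using hsep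
  have hsphere : ∀ k, w k ∈ Metric.sphere (0 : EuclideanSpace ℝ (Fin d)) 1 := by
    intro k; simpa [Metric.mem_sphere, dist_eq_norm] using hwnorm k
  obtain ⟨v, hvmem, φ, hφmono, hφtend⟩ :=
    (isCompact_sphere (0 : EuclideanSpace ℝ (Fin d)) 1).tendsto_subseq hsphere
  have hvnorm : ‖v‖ = 1 := by simpa [Metric.mem_sphere, dist_eq_norm] using hvmem
  have hlim1 : ∀ a ∈ K, ⟪v, a⟫ ≤ ⟪v, p⟫ := by
    intro a ha
    have hle : ∀ j : ℕ, ⟪w (φ j), a⟫ ≤ ⟪w (φ j), p⟫ + (1/(φ j + 1) : ℝ) * ⟪w (φ j), u⟫ := by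
      intro j
      have := hwsup (φ j) a ha
      rwa [inner_add_right, real_inner_smul_right] at this
    have h1 : Filter.Tendsto (fun j => ⟪w (φ j), a⟫) Filter.atTop (nhds ⟪v, a⟫) :=
      hφtend.inner tendsto_const_nhds
    have h2 : Filter.Tendsto (fun j => ⟪w (φ j), p⟫ + (1/(φ j + 1) : ℝ) * ⟪w (φ j), u⟫)
        Filter.atTop (nhds (⟪v, p⟫ + 0 * ⟪v, u⟫)) := by
      refine Filter.Tendsto.add (hφtend.inner tendsto_const_nhds) (Filter.Tendsto.mul ?_
        (hφtend.inner tendsto_const_nhds))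
      have h0 : Filter.Tendsto (fun k : ℕ => (1/(k+1) : ℝ)) Filter.atTop (nhds 0) :=
        tendsto_one_div_add_atTop_nhds_zero_nat
      exact h0.comp (hφmono.tendsto_atTop)
    have := le_of_tendsto_of_tendsto' h1 h2 hle
    simpa using this
  have hlim2 : (0:ℝ) ≤ ⟪v, u⟫ := by
    have hle : ∀ j : ℕ, (0:ℝ) ≤ ⟪w (φ j), u⟫ := by
      intro j
      have := hwsup (φ j) p hpK
      rw [inner_add_right, real_inner_smul_right] at this
      have hpos : (0:ℝ) < 1/((φ j : ℝ)+1) := by positivity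
      nlinarith
    exact ge_of_tendsto' (hφtend.inner tendsto_const_nhds) hle
  have hveq : v = n := huniq v ⟨hvnorm, fun x hx => by
    have := hlim1 x hx
    rwa [real_inner_comm x v, real_inner_comm p v] at this⟩
  rw [hveq, real_inner_comm] at hlim2
  linarith

theorem count_arc (m : ℕ) (hm : 1 ≤ m) (φ : ℝ) :
    m ≤ Multiset.countP (fun k : ℕ => Real.cos (2*π*k/(2*m+1) - φ) < 0)
      (Multiset.range (2*m+1)) := by
  classical
  set N : ℕ := 2*m+1 with hN
  have hNpos : (0:ℝ) < N := by positivity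
  set s : ℝ := 2*π/N with hs
  have hspos : 0 < s := by positivity
  set t : ℝ := (φ + π/2)/s with ht
  set n₀ : ℤ := ⌊t⌋ with hn0
  have hcount : Multiset.countP (fun k : ℕ => Real.cos (2*π*k/(2*m+1) - φ) < 0)
      (Multiset.range N)
      = ((Finset.range N).filter (fun k : ℕ => Real.cos (2*π*k/(2*m+1) - φ) < 0)).card := by
    rw [Multiset.countP_eq_card_filter]
    rfl
  rw [hcount]
  set T := (Finset.range N).filter (fun k : ℕ => Real.cos (2*π*k/(2*m+1) - φ) < 0) with hT
  have key : ∀ j : ℕ, j < m → (((n₀ + j + 1) % (N:ℤ)).toNat ∈ T) := by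
    intro j hj
    set a : ℤ := n₀ + j + 1 with ha
    set q : ℤ := a / (N:ℤ) with hq
    set r : ℤ := a % (N:ℤ) with hr
    have hNZ : (0:ℤ) < (N:ℤ) := by positivity
    have hr0 : 0 ≤ r := Int.emod_nonneg a (by omega)
    have hrN : r < N := Int.emod_lt_of_pos a hNZ
    have hrdef : r = a - (N:ℤ) * q := by rw [hr, hq, Int.emod_def]
    set k : ℕ := r.toNat with hk
    have hkr : (k:ℤ) = r := Int.toNat_of_nonneg hr0
    have hkN : k < N := by omega
    have hks : (k:ℝ) * s = (a:ℝ) * s - (q:ℝ) * (2*π) := by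
      have h1 : (k:ℝ) = (a:ℝ) - (N:ℝ) * (q:ℝ) := by
        rw [← Int.cast_natCast, hkr, hrdef]; push_cast; ring
      have h2 : (N:ℝ) * s = 2*π := by
        rw [hs]; field_simp
      calc (k:ℝ) * s = ((a:ℝ) - (N:ℝ)*(q:ℝ)) * s := by rw [h1]
        _ = (a:ℝ)*s - (q:ℝ)*((N:ℝ)*s) := by ring
        _ = (a:ℝ)*s - (q:ℝ)*(2*π) := by rw [h2]
    have harg : 2*π*(k:ℝ)/(2*(m:ℝ)+1) - φ = ((a:ℝ)*s - φ) - q*(2*π) := by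
      have : 2*π*(k:ℝ)/(2*(m:ℝ)+1) = (k:ℝ) * s := by
        rw [hs, hN]; push_cast; ring
      rw [this, hks]; ring
    have hts : t * s = φ + π/2 := by
      rw [ht, div_mul_cancel₀ _ (ne_of_gt hspos)]
    have hlow : φ + π/2 < (a:ℝ) * s := by
      have h1 : t < (a:ℝ) := by
        have := Int.lt_floor_add_one t
        have h2 : (n₀:ℝ) + 1 ≤ (a:ℝ) := by rw [ha]; push_cast; linarith [Nat.cast_nonneg (α := ℝ) j]
        linarith
      calc φ + π/2 = t * s := hts.symm
        _ < (a:ℝ) * s := by exact mul_lt_mul_of_pos_right h1 hspos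
    have hhigh : (a:ℝ) * s < π + (φ + π/2) := by
      have h1 : (a:ℝ) ≤ t + m := by
        have h2 : (n₀:ℝ) ≤ t := Int.floor_le t
        rw [ha]; push_cast
        have : (j:ℝ) + 1 ≤ (m:ℝ) := by exact_mod_cast Nat.succ_le_of_lt hj
        linarith
      have hms : (m:ℝ) * s < π := by
        have heq : (m:ℝ) * s = (2*(m:ℝ))/(N:ℝ) * π := by rw [hs]; ring
        have hfrac : (2*(m:ℝ))/(N:ℝ) < 1 := by
          rw [div_lt_one hNpos, hN]; push_cast; linarith
        rw [heq]
        nlinarith [Real.pi_pos]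
      calc (a:ℝ) * s ≤ (t + m) * s := mul_le_mul_of_nonneg_right h1 hspos.le
        _ = t * s + m * s := by ring
        _ < (φ + π/2) + π := by rw [hts]; linarith
        _ = π + (φ + π/2) := by ring
    have hcos : Real.cos (2*π*(k:ℝ)/(2*(m:ℝ)+1) - φ) < 0 := by
      rw [harg, Real.cos_sub_int_mul_two_pi]
      apply Real.cos_neg_of_pi_div_two_lt_of_lt <;> [linarith; linarith]
    exact Finset.mem_filter.2 ⟨Finset.mem_range.2 hkN, hcos⟩
  have hinj : ∀ j ∈ Finset.range m, ∀ j' ∈ Finset.range m,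
      ((n₀ + j + 1) % (N:ℤ)).toNat = ((n₀ + j' + 1) % (N:ℤ)).toNat → j = j' := by
    intro j hj j' hj' heq
    rw [Finset.mem_range] at hj hj'
    have hNZ : (0:ℤ) < (N:ℤ) := by positivity
    have h1 : (n₀ + j + 1) % (N:ℤ) = (n₀ + j' + 1) % (N:ℤ) := by
      have a0 : 0 ≤ (n₀ + j + 1) % (N:ℤ) := Int.emod_nonneg _ (by omega)
      have b0 : 0 ≤ (n₀ + j' + 1) % (N:ℤ) := Int.emod_nonneg _ (by omega)
      omega
    have hdvd : (N:ℤ) ∣ ((n₀ + j' + 1) - (n₀ + j + 1)) := Int.ModEq.dvd h1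
    have : ((n₀ + j' + 1) - (n₀ + j + 1)) = (j':ℤ) - j := by ring
    rw [this] at hdvd
    have habs : |(j':ℤ) - j| < N := by
      rw [abs_lt]; constructor <;> [omega; omega]
    have := Int.eq_zero_of_abs_lt_dvd hdvd habs
    omega
  calc m = (Finset.range m).card := (Finset.card_range m).symm
    _ ≤ T.card := Finset.card_le_card_of_injOn _ (fun j hj => key j (Finset.mem_range.1 hj)) hinj

theorem countP_mono' {α : Type*} {p q : α → Prop} [DecidablePred p] [DecidablePred q]
    {s : Multiset α} (h : ∀ a ∈ s, p a → q a) :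
    Multiset.countP p s ≤ Multiset.countP q s := by
  induction s using Multiset.induction_on with
  | empty => simp
  | cons a t ih =>
    rw [Multiset.countP_cons, Multiset.countP_cons]
    have h1 := h a (Multiset.mem_cons_self a t)
    have h2 : Multiset.countP p t ≤ Multiset.countP q t :=
      ih fun x hx => h x (Multiset.mem_cons_of_mem hx)
    split_ifs with hp hq hq <;> simp_all <;> omega

theorem frontier_nonempty {d : ℕ} {K : Set (EuclideanSpace ℝ (Fin d))} (hd : 1 ≤ d)
    (hKc : IsCompact K) (hne : K.Nonempty) : (frontier K).Nonempty := by
  haveI : Nontrivial (EuclideanSpace ℝ (Fin d)) := by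
    refine nontrivial_of_ne (EuclideanSpace.single ⟨0, by omega⟩ (1:ℝ)) 0 ?_
    intro h
    have := congrArg (‖·‖) h
    simp [EuclideanSpace.norm_single] at this
  rw [Set.nonempty_iff_ne_empty]
  intro hfr
  have hopen : IsOpen K := by
    rw [hKc.isClosed.frontier_eq] at hfr
    have hsub : K ⊆ interior K := fun x hx => by
      by_contra hxint
      exact (Set.eq_empty_iff_forall_notMem.1 hfr x) ⟨hx, hxint⟩
    have heq : K = interior K := Set.Subset.antisymm hsub interior_subset
    rw [heq]; exact isOpen_interior
  rcases isClopen_iff.1 ⟨hKc.isClosed, hopen⟩ with h | h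
  · exact Set.not_nonempty_empty (h ▸ hne)
  · exact hKc.ne_univ h

def vec2 (a b : ℝ) : EuclideanSpace ℝ (Fin 2) := WithLp.toLp 2 ![a, b]

theorem vec2_inner (a b : ℝ) (n : EuclideanSpace ℝ (Fin 2)) :
    ⟪vec2 a b, n⟫ = a * n 0 + b * n 1 := by
  simp [vec2, PiLp.inner_apply, Fin.sum_univ_two, RCLike.inner_apply, mul_comm]

theorem vec2_norm (a b : ℝ) (h : a^2 + b^2 = 1) : ‖vec2 a b‖ = 1 := by
  rw [EuclideanSpace.norm_eq]
  have : ∑ i, ‖(vec2 a b) i‖ ^ 2 = a^2+b^2 := by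
    simp [vec2, Fin.sum_univ_two, sq_abs]
  rw [this, h, Real.sqrt_one]

def perp (u : EuclideanSpace ℝ (Fin 2)) : EuclideanSpace ℝ (Fin 2) := WithLp.toLp 2 ![-(u 1), u 0]

theorem perp_inner (u : EuclideanSpace ℝ (Fin 2)) : ⟪u, perp u⟫ = 0 := by
  simp [perp, PiLp.inner_apply, Fin.sum_univ_two, RCLike.inner_apply]
  ring

theorem perp_ne_zero {u : EuclideanSpace ℝ (Fin 2)} (hu : ‖u‖ = 1) : perp u ≠ 0 := by
  intro h
  have h0 : perp u 0 = 0 := by rw [h]; rfl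
  have h1 : perp u 1 = 0 := by rw [h]; rfl
  simp only [perp] at h0 h1
  have : u = 0 := by
    ext i
    fin_cases i
    · simpa using h1
    · simpa using h0
  rw [this] at hu; simp at hu

/-- Lower bound: any `m`-fold illuminating multiset has at least `2m+1` elements. -/
theorem lower_bound {m : ℕ} (hm : 1 ≤ m) {K : Set (EuclideanSpace ℝ (Fin 2))}
    (hKc : IsCompact K) (hKint : (interior K).Nonempty)
    {U : Multiset (EuclideanSpace ℝ (Fin 2))} (hU : MFoldIlluminates m K U) :
    2 * m + 1 ≤ Multiset.card U := by
  classical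
  have hne : K.Nonempty := hKint.mono interior_subset
  obtain ⟨p₀, hp₀⟩ := frontier_nonempty (by omega) hKc hne
  -- U is nonempty
  have hUne : ∃ u₁, u₁ ∈ U := by
    by_contra hUe
    push_neg at hUe
    have := hU.2 p₀ hp₀
    have h0 : Multiset.countP (fun u => Illuminates K u p₀) U = 0 :=
      Multiset.countP_eq_zero.2 fun a ha _ => hUe a ha
    omega
  obtain ⟨u₁, hu₁⟩ := hUne
  have hu₁n : ‖u₁‖ = 1 := hU.1 u₁ hu₁
  set v := perp u₁ with hv
  have hvne : v ≠ 0 := perp_ne_zero hu₁n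
  have hvneg : -v ≠ 0 := neg_ne_zero.2 hvne
  obtain ⟨p, hpfr, hpsup⟩ := exists_support_point hKc hne v hvne
  obtain ⟨q, hqfr, hqsup⟩ := exists_support_point hKc hne (-v) hvneg
  set P : EuclideanSpace ℝ (Fin 2) → Prop := fun u => Illuminates K u p with hP
  set Q : EuclideanSpace ℝ (Fin 2) → Prop := fun u => Illuminates K u q with hQ
  have hPneg : ∀ u, P u → ⟪u, v⟫ < 0 := fun u hu => ill_inner_neg hpsup hvne hu
  have hQpos : ∀ u, Q u → 0 < ⟪u, v⟫ := by
    intro u hu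
    have := ill_inner_neg hqsup hvneg hu
    rw [inner_neg_right] at this
    linarith
  have hu₁v : ⟪u₁, v⟫ = (0:ℝ) := perp_inner u₁
  have hu₁P : ¬ P u₁ := fun h => by have := hPneg u₁ h; rw [hu₁v] at this; exact lt_irrefl _ this
  have hu₁Q : ¬ Q u₁ := fun h => by have := hQpos u₁ h; rw [hu₁v] at this; exact lt_irrefl _ this
  have hmP : m ≤ Multiset.countP P U := hU.2 p hpfr
  have hmQ : m ≤ Multiset.countP Q U := hU.2 q hqfr
  set t := U.filter (fun u => ¬ P u) with htdef
  have hcardsplit : Multiset.card U = Multiset.countP P U + Multiset.countP (fun u => ¬ P u) U :=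
    Multiset.card_eq_countP_add_countP _ _
  have hct : Multiset.countP (fun u => ¬ P u) U = Multiset.card t := by
    rw [htdef, Multiset.countP_eq_card_filter]
  -- countP Q U = countP Q t
  have hQsplit : Multiset.countP Q U = Multiset.countP Q t := by
    conv_lhs => rw [← Multiset.filter_add_not P U]
    rw [Multiset.countP_add]
    have h0 : Multiset.countP Q (U.filter P) = 0 := by
      apply Multiset.countP_eq_zero.2
      intro a ha hQa
      have haP : P a := (Multiset.mem_filter.1 ha).2
      have := hPneg a haP
      have := hQpos a hQa
      linarith
    rw [h0, zero_add]
  have hcardt : Multiset.countP Q t + 1 ≤ Multiset.card t := by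
    have hsplit2 : Multiset.card t = Multiset.countP Q t + Multiset.countP (fun u => ¬ Q u) t :=
      Multiset.card_eq_countP_add_countP _ _
    have hpos : 0 < Multiset.countP (fun u => ¬ Q u) t := by
      apply Multiset.countP_pos.2
      exact ⟨u₁, Multiset.mem_filter.2 ⟨hu₁, hu₁P⟩, hu₁Q⟩
    omega
  rw [hQsplit] at hmQ
  omega

/-- Upper bound: the `2m+1` directions of a regular `(2m+1)`-gon `m`-fold illuminate `K`. -/
theorem upper_bound {m : ℕ} (hm : 1 ≤ m) {K : Set (EuclideanSpace ℝ (Fin 2))}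
    (hKc : IsCompact K) (hKconv : Convex ℝ K) (hKint : (interior K).Nonempty)
    (hsmooth : ∀ p ∈ frontier K,
      ∃! u : EuclideanSpace ℝ (Fin 2), ‖u‖ = 1 ∧ ∀ x ∈ K, ⟪x, u⟫ ≤ ⟪p, u⟫) :
    MFoldIlluminates m K ((Multiset.range (2*m+1)).map
      (fun k : ℕ => vec2 (Real.cos (2*π*(k:ℝ)/(2*m+1))) (Real.sin (2*π*(k:ℝ)/(2*m+1))))) := by
  classical
  set f : ℕ → EuclideanSpace ℝ (Fin 2) :=
    fun k : ℕ => vec2 (Real.cos (2*π*(k:ℝ)/(2*m+1))) (Real.sin (2*π*(k:ℝ)/(2*m+1))) with hf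
  constructor
  · intro u hu
    obtain ⟨k, _, rfl⟩ := Multiset.mem_map.1 hu
    refine vec2_norm _ _ ?_
    have := Real.sin_sq_add_cos_sq (2*π*(k:ℝ)/(2*m+1))
    linarith
  · intro p hp
    obtain ⟨n, ⟨hn1, hn2⟩, hnu⟩ := hsmooth p hp
    have huniq : ∀ v : EuclideanSpace ℝ (Fin 2),
        (‖v‖ = 1 ∧ ∀ x ∈ K, ⟪x, v⟫ ≤ ⟪p, v⟫) → v = n := fun v hv => hnu v hv
    -- write n = (cos φ, sin φ)
    have hn01 : n 0 ^ 2 + n 1 ^ 2 = 1 := by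
      have hinner : ⟪n, n⟫ = n 0 * n 0 + n 1 * n 1 := by
        rw [PiLp.inner_apply, Fin.sum_univ_two]
        simp only [RCLike.inner_apply, conj_trivial]
      have h2 : ⟪n, n⟫ = ‖n‖^2 := real_inner_self_eq_norm_sq n
      rw [hn1] at h2
      nlinarith [hinner, h2]
    set z : ℂ := ⟨n 0, n 1⟩ with hz
    have habs : ‖z‖ = 1 := by
      rw [Complex.norm_def, Complex.normSq_apply]
      simp only [hz]
      rw [show n 0 * n 0 + n 1 * n 1 = 1 by nlinarith [hn01]]
      exact Real.sqrt_one
    have hzne : z ≠ 0 := by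
      intro h0
      rw [h0] at habs
      simp at habs
    set φ := Complex.arg z with hφ
    have hcosφ : Real.cos φ = n 0 := by
      rw [hφ, Complex.cos_arg hzne, habs]
      simp [hz]
    have hsinφ : Real.sin φ = n 1 := by
      rw [hφ, Complex.sin_arg, habs]
      simp [hz]
    -- each direction with negative inner product with n illuminates p
    have step1 : Multiset.countP (fun u => ⟪u, n⟫ < 0)
          ((Multiset.range (2*m+1)).map f)
        ≤ Multiset.countP (fun u => Illuminates K u p) ((Multiset.range (2*m+1)).map f) := by
      apply countP_mono'
      intro a _ ha
      exact smooth_illuminates hKc hKconv hKint hp huniq ha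
    refine le_trans ?_ step1
    rw [Multiset.countP_map]
    have heqpred : ∀ k ∈ Multiset.range (2*m+1),
        (Real.cos (2*π*(k:ℝ)/(2*m+1) - φ) < 0 ↔ ⟪f k, n⟫ < 0) := by
      intro k _
      have : ⟪f k, n⟫ = Real.cos (2*π*k/(2*m+1) - φ) := by
        rw [hf]
        simp only []
        rw [vec2_inner, Real.cos_sub, ← hcosφ, ← hsinφ]
      rw [this]
    calc m ≤ Multiset.countP (fun k : ℕ => Real.cos (2*π*(k:ℝ)/(2*m+1) - φ) < 0)
          (Multiset.range (2*m+1)) := count_arc m hm φ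
      _ ≤ Multiset.countP (fun k : ℕ => ⟪f k, n⟫ < 0) (Multiset.range (2*m+1)) :=
          countP_mono' fun k hk h => (heqpred k hk).1 h
      _ = Multiset.card ((Multiset.range (2*m+1)).filter (fun k => ⟪f k, n⟫ < 0)) :=
          Multiset.countP_eq_card_filter _ _

end Aux

/-- Theorem 2: for a smooth planar convex body `K` (unique supporting line at
each boundary point), `I^m(K) = 2m + 1`. -/
theorem mfold_illumination_smooth_planar (m : ℕ) (hm : 1 ≤ m)
    (K : Set (EuclideanSpace ℝ (Fin 2)))
    (hKc : IsCompact K) (hKconv : Convex ℝ K) (hKint : (interior K).Nonempty)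
    (hsmooth : ∀ p ∈ frontier K,
      ∃! u : EuclideanSpace ℝ (Fin 2), ‖u‖ = 1 ∧ ∀ x ∈ K, ⟪x, u⟫ ≤ ⟪p, u⟫) :
    illumNum m K = 2 * m + 1 := by
  have hmem : (2*m+1) ∈ {n | ∃ U : Multiset (EuclideanSpace ℝ (Fin 2)),
      MFoldIlluminates m K U ∧ Multiset.card U = n} := by
    refine ⟨_, upper_bound hm hKc hKconv hKint hsmooth, ?_⟩
    rw [Multiset.card_map, Multiset.card_range]
  have hlb : ∀ n ∈ {n | ∃ U : Multiset (EuclideanSpace ℝ (Fin 2)),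
      MFoldIlluminates m K U ∧ Multiset.card U = n}, 2*m+1 ≤ n := by
    rintro nn ⟨U, hU, rfl⟩
    exact lower_bound hm hKc hKint hU
  exact IsLeast.csInf_eq ⟨hmem, hlb⟩
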